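/- Let p(z) = Σ_{j=0}^n a_j z^j be a complex polynomial of degree n that is at least a trinomial (at least three nonzero coefficients), and let k and ℓ be the smallest positive integers such that a_{n-k} ≠ 0 and a_{n-k-ℓ} ≠ 0. Define q_1(z) = (a_n z^{k+ℓ} − a_{n-k} z^ℓ − a_{n-k-ℓ}) p(z). Then ρ[q_1] ≤ ρ[p]. -/

import Mathlib

open Polynomial

/-- The function whose unique positive root is the Cauchy radius of `q`. -/
noncomputable def cauchyFun (q : Polynomial ℂ) (x : ℝ) : ℝ :=
  ‖q.leadingCoeff‖ * x ^ q.natDegree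
    - ∑ j ∈ Finset.range q.natDegree, ‖q.coeff j‖ * x ^ j

/-- For the multiplier `aₙ z^{k+ℓ} - a_{n-k} z^ℓ - a_{n-k-ℓ}`,
the Cauchy radius of `q₁ = (aₙ z^{k+ℓ} - a_{n-k} z^ℓ - a_{n-k-ℓ}) p` is at most that of `p`. -/
lemma shiftSum (g : ℕ → ℝ) (c n : ℕ) :
    ∑ j ∈ Finset.range n, (if c ≤ j then g (j - c) else 0)
      = ∑ i ∈ Finset.range (n - c), g i := by
  rcases le_or_gt c n with hcn | hcn
  · have h : n = c + (n - c) := by omega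
    conv_lhs => rw [h]
    rw [Finset.sum_range_add]
    have h1 : ∑ j ∈ Finset.range c, (if c ≤ j then g (j - c) else 0) = 0 :=
      Finset.sum_eq_zero fun j hj => if_neg (by have := Finset.mem_range.mp hj; omega)
    rw [h1, zero_add]
    exact Finset.sum_congr rfl fun i _ => by
      rw [if_pos (Nat.le_add_right _ _), Nat.add_sub_cancel_left]
  · have h : n - c = 0 := by omega
    rw [h]
    simp only [Finset.range_zero, Finset.sum_empty]
    exact Finset.sum_eq_zero fun j hj => if_neg (by have := Finset.mem_range.mp hj; omega)

lemma cauchy_mono (q : Polynomial ℂ) (x y : ℝ) (hx : 0 < x) (hy : 0 < y)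
    (j0 : ℕ) (hj0 : j0 < q.natDegree) (hc : q.coeff j0 ≠ 0)
    (hxr : ‖q.leadingCoeff‖ * x ^ q.natDegree
      - ∑ j ∈ Finset.range q.natDegree, ‖q.coeff j‖ * x ^ j = 0)
    (hyr : 0 ≤ ‖q.leadingCoeff‖ * y ^ q.natDegree
      - ∑ j ∈ Finset.range q.natDegree, ‖q.coeff j‖ * y ^ j) : x ≤ y := by
  by_contra hlt
  push_neg at hlt
  set N := q.natDegree with hN
  have key : (∑ j ∈ Finset.range N, ‖q.coeff j‖ * x ^ j) * y ^ N
      < (∑ j ∈ Finset.range N, ‖q.coeff j‖ * y ^ j) * x ^ N := by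
    rw [Finset.sum_mul, Finset.sum_mul]
    refine Finset.sum_lt_sum (fun j hj => ?_) ⟨j0, Finset.mem_range.mpr hj0, ?_⟩
    · have hjN : j < N := Finset.mem_range.mp hj
      have e1 : y ^ N = y ^ j * y ^ (N - j) := by rw [← pow_add]; congr 1; omega
      have e2 : x ^ N = x ^ j * x ^ (N - j) := by rw [← pow_add]; congr 1; omega
      have h3 : y ^ (N - j) ≤ x ^ (N - j) := pow_le_pow_left₀ hy.le hlt.le _
      have habs : (0:ℝ) ≤ ‖q.coeff j‖ := norm_nonneg _
      rw [e1, e2]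
      have r1 : ‖q.coeff j‖ * x ^ j * (y ^ j * y ^ (N - j))
          = (‖q.coeff j‖ * x ^ j * y ^ j) * y ^ (N - j) := by ring
      have r2 : ‖q.coeff j‖ * y ^ j * (x ^ j * x ^ (N - j))
          = (‖q.coeff j‖ * x ^ j * y ^ j) * x ^ (N - j) := by ring
      rw [r1, r2]
      exact mul_le_mul_of_nonneg_left h3 (by positivity)
    · have hjN : j0 < N := hj0
      have e1 : y ^ N = y ^ j0 * y ^ (N - j0) := by rw [← pow_add]; congr 1; omega
      have e2 : x ^ N = x ^ j0 * x ^ (N - j0) := by rw [← pow_add]; congr 1; omega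
      have h3 : y ^ (N - j0) < x ^ (N - j0) := pow_lt_pow_left₀ hlt hy.le (by omega)
      have habs : (0:ℝ) < ‖q.coeff j0‖ := norm_pos_iff.mpr hc
      rw [e1, e2]
      have r1 : ‖q.coeff j0‖ * x ^ j0 * (y ^ j0 * y ^ (N - j0))
          = (‖q.coeff j0‖ * x ^ j0 * y ^ j0) * y ^ (N - j0) := by ring
      have r2 : ‖q.coeff j0‖ * y ^ j0 * (x ^ j0 * x ^ (N - j0))
          = (‖q.coeff j0‖ * x ^ j0 * y ^ j0) * x ^ (N - j0) := by ring
      rw [r1, r2]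
      have hpos : 0 < ‖q.coeff j0‖ * x ^ j0 * y ^ j0 := by positivity
      exact (mul_lt_mul_iff_right₀ hpos).mpr h3
  have h1 : (∑ j ∈ Finset.range N, ‖q.coeff j‖ * y ^ j) * x ^ N
      ≤ (‖q.leadingCoeff‖ * y ^ N) * x ^ N := by
    have := pow_pos hx N
    nlinarith
  have h2 : (∑ j ∈ Finset.range N, ‖q.coeff j‖ * x ^ j) * y ^ N
      = (‖q.leadingCoeff‖ * x ^ N) * y ^ N := by
    have : ‖q.leadingCoeff‖ * x ^ N
      = ∑ j ∈ Finset.range N, ‖q.coeff j‖ * x ^ j := by linarith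
    rw [this]
  nlinarith [key, h1, h2]

theorem improved_cauchy_radius_q1
    (p : Polynomial ℂ) (n : ℕ) (hp : p ≠ 0) (hn : p.natDegree = n)
    (k ℓ : ℕ) (hk : 0 < k) (hℓ : 0 < ℓ) (hkl : k + ℓ ≤ n)
    (hknz : p.coeff (n - k) ≠ 0)
    (hkmin : ∀ j, 0 < j → j < k → p.coeff (n - j) = 0)
    (hlnz : p.coeff (n - k - ℓ) ≠ 0)
    (hlmin : ∀ j, 0 < j → j < ℓ → p.coeff (n - k - j) = 0)
    (x y : ℝ) (hx : 0 < x) (hy : 0 < y)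
    (hxroot : cauchyFun
      ((C (p.coeff n) * X ^ (k + ℓ) - C (p.coeff (n - k)) * X ^ ℓ
          - C (p.coeff (n - k - ℓ))) * p) x = 0)
    (hyroot : cauchyFun p y = 0) :
    x ≤ y := by
  unfold cauchyFun at hxroot hyroot
  have han : p.coeff n ≠ 0 := by
    rw [← hn]
    exact fun h => hp (Polynomial.leadingCoeff_eq_zero.mp h)
  set m : Polynomial ℂ := C (p.coeff n) * X ^ (k + ℓ) - C (p.coeff (n - k)) * X ^ ℓ
      - C (p.coeff (n - k - ℓ)) with hm
  have hmc : ∀ j, m.coeff j = (if j = k + ℓ then p.coeff n else 0)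
      - (if j = ℓ then p.coeff (n - k) else 0) - (if j = 0 then p.coeff (n - k - ℓ) else 0) := by
    intro j
    simp [hm, coeff_sub, coeff_C_mul, coeff_X_pow, coeff_C, mul_ite]
  have hmlead : m.coeff (k + ℓ) = p.coeff n := by
    rw [hmc]
    have h1 : ¬ (k + ℓ = ℓ) := by omega
    have h2 : ¬ (k + ℓ = 0) := by omega
    simp [h1, h2, Nat.pos_iff_ne_zero.mp hk]
  have hm0 : m ≠ 0 := fun h => han (by rw [← hmlead, h, coeff_zero])
  have hmdeg : m.natDegree = k + ℓ := by
    refine le_antisymm ?_ (le_natDegree_of_ne_zero (hmlead ▸ han))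
    refine le_trans (natDegree_sub_le _ _) (max_le (le_trans (natDegree_sub_le _ _) ?_) ?_)
    · exact max_le (natDegree_C_mul_X_pow_le _ _)
        (le_trans (natDegree_C_mul_X_pow_le _ _) (by omega))
    · simp [natDegree_C]
  have hq10 : m * p ≠ 0 := mul_ne_zero hm0 hp
  have hq1deg : (m * p).natDegree = n + k + ℓ := by
    rw [natDegree_mul hm0 hp, hmdeg, hn]; ring
  have hq1lead : (m * p).leadingCoeff = p.coeff n * p.coeff n := by
    rw [leadingCoeff_mul]
    unfold Polynomial.leadingCoeff
    rw [hmdeg, hmlead, hn]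
  -- trailing degree facts
  have htd : (m * p).natTrailingDegree < (m * p).natDegree := by
    rw [natTrailingDegree_mul hm0 hp, hq1deg]
    have h1 : m.natTrailingDegree = 0 := by
      apply natTrailingDegree_eq_zero.mpr
      right
      rw [hmc]
      have h2 : ¬ ((0:ℕ) = k + ℓ) := by omega
      have h3 : ¬ ((0:ℕ) = ℓ) := by omega
      simpa [h2, h3] using hlnz
    have h2 : p.natTrailingDegree ≤ n := hn ▸ natTrailingDegree_le_natDegree p
    omega
  have htcoeff : (m * p).coeff ((m * p).natTrailingDegree) ≠ 0 :=
    coeff_natTrailingDegree_ne_zero.mpr hq10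
  -- coefficient formula for m * p
  have hq1c : ∀ j, (m * p).coeff j
      = (if k + ℓ ≤ j then p.coeff n * p.coeff (j - (k + ℓ)) else 0)
      - (if ℓ ≤ j then p.coeff (n - k) * p.coeff (j - ℓ) else 0)
      - p.coeff (n - k - ℓ) * p.coeff j := by
    intro j
    have key : ∀ (c : ℂ) (i : ℕ), (C c * X ^ i * p).coeff j
        = if i ≤ j then c * p.coeff (j - i) else 0 := by
      intro c i
      rw [mul_right_comm, coeff_mul_X_pow']
      split_ifs with h
      · rw [coeff_C_mul]
      · rfl
    rw [hm, sub_mul, sub_mul, coeff_sub, coeff_sub, key, key, coeff_C_mul]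
  -- vanishing of intermediate coefficients
  have hvan : ∀ i : ℕ, n - k - ℓ < i → i ≠ n - k → i ≠ n → p.coeff i = 0 := by
    intro i h1 h2 h3
    by_cases hin : n < i
    · exact coeff_eq_zero_of_natDegree_lt (hn ▸ hin)
    · push_neg at hin
      by_cases hik : n - k < i
      · have hi : i = n - (n - i) := by omega
        rw [hi]; exact hkmin _ (by omega) (by omega)
      · have hi : i = n - k - (n - k - i) := by omega
        rw [hi]; exact hlmin _ (by omega) (by omega)
  -- top coefficients
  have htop : ∀ j, n ≤ j → j < n + k + ℓ → (m * p).coeff j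
      = if k ≤ ℓ ∧ j = n + ℓ - k then -(p.coeff (n - k) * p.coeff (n - k)) else 0 := by
    intro j hj1 hj2
    rw [hq1c j, if_pos (by omega : k + ℓ ≤ j), if_pos (by omega : ℓ ≤ j)]
    have hT1 : p.coeff (j - (k + ℓ)) = if j = n then p.coeff (n - k - ℓ)
        else if j = n + ℓ then p.coeff (n - k) else 0 := by
      split_ifs with h h'
      · congr 1; omega
      · congr 1; omega
      · exact hvan _ (by omega) (by omega) (by omega)
    have hT2 : p.coeff (j - ℓ) = if j = n + ℓ then p.coeff n
        else if k ≤ ℓ ∧ j = n + ℓ - k then p.coeff (n - k) else 0 := by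
      split_ifs with h h'
      · congr 1; omega
      · congr 1; omega
      · exact hvan _ (by omega) (by omega) (by omega)
    have hT3 : p.coeff j = if j = n then p.coeff n else 0 := by
      split_ifs with h
      · rw [h]
      · exact hvan _ (by omega) (by omega) h
    rw [hT1, hT2, hT3]
    split_ifs <;> first | (exfalso; omega) | ring
  -- now apply monotonicity; remaining: 0 ≤ cauchyFun (m*p) y
  refine cauchy_mono (m * p) x y hx hy _ htd htcoeff hxroot ?_
  have hlc : p.leadingCoeff = p.coeff n := by rw [Polynomial.leadingCoeff, hn]
  rw [hlc, hn] at hyroot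
  rw [hq1deg, hq1lead, norm_mul]
  set α := ‖p.coeff n‖ with hα
  set β := ‖p.coeff (n - k)‖ with hβ
  set γ := ‖p.coeff (n - k - ℓ)‖ with hγ
  set A := ∑ i ∈ Finset.range n, ‖p.coeff i‖ * y ^ i with hA
  have hyA : A = α * y ^ n := by linarith
  have hαnn : 0 ≤ α := norm_nonneg _
  have hβnn : 0 ≤ β := norm_nonneg _
  have hγnn : 0 ≤ γ := norm_nonneg _
  -- split the sum
  have hsplit : ∑ j ∈ Finset.range (n + k + ℓ), ‖(m * p).coeff j‖ * y ^ j
      = (∑ j ∈ Finset.range n, ‖(m * p).coeff j‖ * y ^ j)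
        + ∑ i ∈ Finset.range (k + ℓ), ‖(m * p).coeff (n + i)‖ * y ^ (n + i) := by
    rw [show n + k + ℓ = n + (k + ℓ) by ring, Finset.sum_range_add]
  -- the top part of the sum
  have htopsum : ∑ i ∈ Finset.range (k + ℓ), ‖(m * p).coeff (n + i)‖ * y ^ (n + i)
      = if k ≤ ℓ then β * β * y ^ (n + ℓ - k) else 0 := by
    have hterm : ∀ i ∈ Finset.range (k + ℓ),
        ‖(m * p).coeff (n + i)‖ * y ^ (n + i)
        = if k ≤ ℓ ∧ i = ℓ - k then β * β * y ^ (n + i) else 0 := by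
      intro i hi
      have hi' := Finset.mem_range.mp hi
      rw [htop (n + i) (by omega) (by omega)]
      have hiff : (k ≤ ℓ ∧ n + i = n + ℓ - k) ↔ (k ≤ ℓ ∧ i = ℓ - k) := by omega
      rw [if_congr hiff rfl rfl]
      split_ifs with h
      · rw [norm_neg, norm_mul]
      · simp
    rw [Finset.sum_congr rfl hterm]
    by_cases hkℓ : k ≤ ℓ
    · have h2 : ∀ i ∈ Finset.range (k + ℓ),
          (if k ≤ ℓ ∧ i = ℓ - k then β * β * y ^ (n + i) else 0)
          = if i = ℓ - k then β * β * y ^ (n + i) else 0 := by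
        intro i _
        rw [if_congr (and_iff_right hkℓ) rfl rfl]
      rw [Finset.sum_congr rfl h2,
        Finset.sum_ite_eq' (Finset.range (k + ℓ)) (ℓ - k) (fun i => β * β * y ^ (n + i)),
        if_pos (Finset.mem_range.mpr (by omega : ℓ - k < k + ℓ)), if_pos hkℓ]
      simp only [show n + (ℓ - k) = n + ℓ - k from by omega]
    · rw [if_neg hkℓ]
      exact Finset.sum_eq_zero fun i _ => if_neg (by tauto)
  -- bound the low part of the sum
  have hlow : ∑ j ∈ Finset.range n, ‖(m * p).coeff j‖ * y ^ j
      ≤ α * ∑ j ∈ Finset.range n,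
          (if k + ℓ ≤ j then ‖p.coeff (j - (k + ℓ))‖ * y ^ j else 0)
        + β * ∑ j ∈ Finset.range n,
          (if ℓ ≤ j then ‖p.coeff (j - ℓ)‖ * y ^ j else 0)
        + γ * ∑ j ∈ Finset.range n, ‖p.coeff j‖ * y ^ j := by
    rw [Finset.mul_sum, Finset.mul_sum, Finset.mul_sum, ← Finset.sum_add_distrib,
      ← Finset.sum_add_distrib]
    refine Finset.sum_le_sum fun j hj => ?_
    rw [hq1c j]
    have hyj : (0:ℝ) ≤ y ^ j := by positivity
    have tri : ‖(if k + ℓ ≤ j then p.coeff n * p.coeff (j - (k + ℓ)) else 0)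
          - (if ℓ ≤ j then p.coeff (n - k) * p.coeff (j - ℓ) else 0)
          - p.coeff (n - k - ℓ) * p.coeff j‖
        ≤ (if k + ℓ ≤ j then α * ‖p.coeff (j - (k + ℓ))‖ else 0)
          + (if ℓ ≤ j then β * ‖p.coeff (j - ℓ)‖ else 0)
          + γ * ‖p.coeff j‖ := by
      have t1 : ‖if k + ℓ ≤ j then p.coeff n * p.coeff (j - (k + ℓ)) else 0‖
          = if k + ℓ ≤ j then α * ‖p.coeff (j - (k + ℓ))‖ else 0 := by
        split_ifs <;> simp [map_mul, hα]
      have t2 : ‖if ℓ ≤ j then p.coeff (n - k) * p.coeff (j - ℓ) else 0‖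
          = if ℓ ≤ j then β * ‖p.coeff (j - ℓ)‖ else 0 := by
        split_ifs <;> simp [map_mul, hβ]
      have t3 : ‖p.coeff (n - k - ℓ) * p.coeff j‖
          = γ * ‖p.coeff j‖ := norm_mul _ _
      calc ‖(if k + ℓ ≤ j then p.coeff n * p.coeff (j - (k + ℓ)) else 0)
            - (if ℓ ≤ j then p.coeff (n - k) * p.coeff (j - ℓ) else 0)
            - p.coeff (n - k - ℓ) * p.coeff j‖
          ≤ ‖(if k + ℓ ≤ j then p.coeff n * p.coeff (j - (k + ℓ)) else 0)
            - (if ℓ ≤ j then p.coeff (n - k) * p.coeff (j - ℓ) else 0)‖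
            + ‖p.coeff (n - k - ℓ) * p.coeff j‖ := by
            exact norm_sub_le _ _
        _ ≤ ‖if k + ℓ ≤ j then p.coeff n * p.coeff (j - (k + ℓ)) else 0‖
            + ‖if ℓ ≤ j then p.coeff (n - k) * p.coeff (j - ℓ) else 0‖
            + ‖p.coeff (n - k - ℓ) * p.coeff j‖ := by
            have : ‖(if k + ℓ ≤ j then p.coeff n * p.coeff (j - (k + ℓ)) else 0)
                - (if ℓ ≤ j then p.coeff (n - k) * p.coeff (j - ℓ) else 0)‖
                ≤ ‖if k + ℓ ≤ j then p.coeff n * p.coeff (j - (k + ℓ)) else 0‖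
                + ‖if ℓ ≤ j then p.coeff (n - k) * p.coeff (j - ℓ) else 0‖ := by
              exact norm_sub_le _ _
            linarith
        _ = _ := by rw [t1, t2, t3]
    calc ‖(if k + ℓ ≤ j then p.coeff n * p.coeff (j - (k + ℓ)) else 0)
          - (if ℓ ≤ j then p.coeff (n - k) * p.coeff (j - ℓ) else 0)
          - p.coeff (n - k - ℓ) * p.coeff j‖ * y ^ j
        ≤ ((if k + ℓ ≤ j then α * ‖p.coeff (j - (k + ℓ))‖ else 0)
          + (if ℓ ≤ j then β * ‖p.coeff (j - ℓ)‖ else 0)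
          + γ * ‖p.coeff j‖) * y ^ j := mul_le_mul_of_nonneg_right tri hyj
      _ = α * (if k + ℓ ≤ j then ‖p.coeff (j - (k + ℓ))‖ * y ^ j else 0)
          + β * (if ℓ ≤ j then ‖p.coeff (j - ℓ)‖ * y ^ j else 0)
          + γ * (‖p.coeff j‖ * y ^ j) := by
          split_ifs <;> ring
  -- rewrite the shifted sums
  have hshift1 : ∑ j ∈ Finset.range n,
      (if k + ℓ ≤ j then ‖p.coeff (j - (k + ℓ))‖ * y ^ j else 0)
      = (∑ i ∈ Finset.range (n - (k + ℓ)), ‖p.coeff i‖ * y ^ i) * y ^ (k + ℓ) := by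
    have hc : ∀ j ∈ Finset.range n,
        (if k + ℓ ≤ j then ‖p.coeff (j - (k + ℓ))‖ * y ^ j else 0)
        = (if k + ℓ ≤ j then
            (fun i => ‖p.coeff i‖ * y ^ i * y ^ (k + ℓ)) (j - (k + ℓ)) else 0) := by
      intro j _
      split_ifs with h
      · have hyy : y ^ j = y ^ (j - (k + ℓ)) * y ^ (k + ℓ) := by
          rw [← pow_add]; congr 1; omega
        rw [hyy]; ring
      · rfl
    calc ∑ j ∈ Finset.range n,
        (if k + ℓ ≤ j then ‖p.coeff (j - (k + ℓ))‖ * y ^ j else 0)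
        = ∑ j ∈ Finset.range n, (if k + ℓ ≤ j then
            (fun i => ‖p.coeff i‖ * y ^ i * y ^ (k + ℓ)) (j - (k + ℓ)) else 0) :=
          Finset.sum_congr rfl hc
      _ = ∑ i ∈ Finset.range (n - (k + ℓ)),
            ‖p.coeff i‖ * y ^ i * y ^ (k + ℓ) :=
          shiftSum (fun i => ‖p.coeff i‖ * y ^ i * y ^ (k + ℓ)) (k + ℓ) n
      _ = _ := by rw [Finset.sum_mul]
  have hshift2 : ∑ j ∈ Finset.range n,
      (if ℓ ≤ j then ‖p.coeff (j - ℓ)‖ * y ^ j else 0)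
      = (∑ i ∈ Finset.range (n - ℓ), ‖p.coeff i‖ * y ^ i) * y ^ ℓ := by
    have hc : ∀ j ∈ Finset.range n,
        (if ℓ ≤ j then ‖p.coeff (j - ℓ)‖ * y ^ j else 0)
        = (if ℓ ≤ j then
            (fun i => ‖p.coeff i‖ * y ^ i * y ^ ℓ) (j - ℓ) else 0) := by
      intro j _
      split_ifs with h
      · have hyy : y ^ j = y ^ (j - ℓ) * y ^ ℓ := by
          rw [← pow_add]; congr 1; omega
        rw [hyy]; ring
      · rfl
    calc ∑ j ∈ Finset.range n,
        (if ℓ ≤ j then ‖p.coeff (j - ℓ)‖ * y ^ j else 0)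
        = ∑ j ∈ Finset.range n, (if ℓ ≤ j then
            (fun i => ‖p.coeff i‖ * y ^ i * y ^ ℓ) (j - ℓ) else 0) :=
          Finset.sum_congr rfl hc
      _ = ∑ i ∈ Finset.range (n - ℓ), ‖p.coeff i‖ * y ^ i * y ^ ℓ :=
          shiftSum (fun i => ‖p.coeff i‖ * y ^ i * y ^ ℓ) ℓ n
      _ = _ := by rw [Finset.sum_mul]
  rw [hshift1, hshift2] at hlow
  -- prefix-sum bounds
  have hprefix : ∀ c : ℕ, c ≤ n →
      (∑ i ∈ Finset.range (n - c), ‖p.coeff i‖ * y ^ i)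
      + (∑ i ∈ Finset.Ico (n - c) n, ‖p.coeff i‖ * y ^ i) = A := by
    intro c hc
    rw [hA, Finset.range_eq_Ico, Finset.range_eq_Ico]
    exact Finset.sum_Ico_consecutive _ (Nat.zero_le _) (by omega)
  have hb1 : ∑ i ∈ Finset.range (n - (k + ℓ)), ‖p.coeff i‖ * y ^ i
      ≤ A - β * y ^ (n - k) - γ * y ^ (n - k - ℓ) := by
    have h1 := hprefix (k + ℓ) hkl
    have hsub : ({n - k, n - k - ℓ} : Finset ℕ) ⊆ Finset.Ico (n - (k + ℓ)) n := by
      intro i hi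
      simp only [Finset.mem_insert, Finset.mem_singleton] at hi
      rcases hi with h | h <;> (subst h; exact Finset.mem_Ico.mpr (by omega))
    have hne : (n - k : ℕ) ≠ n - k - ℓ := by omega
    have h2 : β * y ^ (n - k) + γ * y ^ (n - k - ℓ)
        ≤ ∑ i ∈ Finset.Ico (n - (k + ℓ)) n, ‖p.coeff i‖ * y ^ i := by
      calc β * y ^ (n - k) + γ * y ^ (n - k - ℓ)
          = ∑ i ∈ ({n - k, n - k - ℓ} : Finset ℕ), ‖p.coeff i‖ * y ^ i := by
            rw [Finset.sum_pair hne]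
        _ ≤ _ := Finset.sum_le_sum_of_subset_of_nonneg hsub (fun i _ _ => by positivity)
    linarith
  have hb2 : ∑ i ∈ Finset.range (n - ℓ), ‖p.coeff i‖ * y ^ i
      ≤ A - (if k ≤ ℓ then β * y ^ (n - k) else 0) := by
    have h1 := hprefix ℓ (by omega)
    by_cases hkℓ : k ≤ ℓ
    · rw [if_pos hkℓ]
      have hsub : ({n - k} : Finset ℕ) ⊆ Finset.Ico (n - ℓ) n := by
        intro i hi
        simp only [Finset.mem_singleton] at hi
        subst hi; exact Finset.mem_Ico.mpr (by omega)
      have h2 : β * y ^ (n - k)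
          ≤ ∑ i ∈ Finset.Ico (n - ℓ) n, ‖p.coeff i‖ * y ^ i := by
        calc β * y ^ (n - k)
            = ∑ i ∈ ({n - k} : Finset ℕ), ‖p.coeff i‖ * y ^ i := by
              rw [Finset.sum_singleton]
          _ ≤ _ := Finset.sum_le_sum_of_subset_of_nonneg hsub (fun i _ _ => by positivity)
      linarith
    · rw [if_neg hkℓ, sub_zero]
      have h2 : 0 ≤ ∑ i ∈ Finset.Ico (n - ℓ) n, ‖p.coeff i‖ * y ^ i :=
        Finset.sum_nonneg fun i _ => by positivity
      linarith
  -- step bounds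
  have hycnn : (0:ℝ) ≤ y ^ (k + ℓ) := by positivity
  have hylnn : (0:ℝ) ≤ y ^ ℓ := by positivity
  have step1 : α * ((∑ i ∈ Finset.range (n - (k + ℓ)), ‖p.coeff i‖ * y ^ i)
        * y ^ (k + ℓ))
      ≤ α * α * y ^ (n + k + ℓ) - β * y ^ ℓ * A - γ * A := by
    have h := mul_le_mul_of_nonneg_left (mul_le_mul_of_nonneg_right hb1 hycnn) hαnn
    have id1 : α * (A * y ^ (k + ℓ)) = α * α * y ^ (n + k + ℓ) := by
      rw [hyA, show y ^ (n + k + ℓ) = y ^ n * y ^ (k + ℓ) from by rw [← pow_add]; congr 1; omega]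
      ring
    have id2 : α * (β * y ^ (n - k) * y ^ (k + ℓ)) = β * y ^ ℓ * A := by
      have e2 : y ^ (n - k) * y ^ (k + ℓ) = y ^ ℓ * y ^ n := by
        rw [← pow_add, ← pow_add]; congr 1; omega
      rw [hyA]; linear_combination (α * β) * e2
    have id3 : α * (γ * y ^ (n - k - ℓ) * y ^ (k + ℓ)) = γ * A := by
      have e3 : y ^ (n - k - ℓ) * y ^ (k + ℓ) = y ^ n := by
        rw [← pow_add]; congr 1; omega
      rw [hyA]; linear_combination (α * γ) * e3
    calc α * ((∑ i ∈ Finset.range (n - (k + ℓ)), ‖p.coeff i‖ * y ^ i)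
          * y ^ (k + ℓ))
        ≤ α * ((A - β * y ^ (n - k) - γ * y ^ (n - k - ℓ)) * y ^ (k + ℓ)) := h
      _ = α * (A * y ^ (k + ℓ)) - α * (β * y ^ (n - k) * y ^ (k + ℓ))
          - α * (γ * y ^ (n - k - ℓ) * y ^ (k + ℓ)) := by ring
      _ = α * α * y ^ (n + k + ℓ) - β * y ^ ℓ * A - γ * A := by rw [id1, id2, id3]
  have step2 : β * ((∑ i ∈ Finset.range (n - ℓ), ‖p.coeff i‖ * y ^ i) * y ^ ℓ)
      ≤ β * y ^ ℓ * A - (if k ≤ ℓ then β * β * y ^ (n + ℓ - k) else 0) := by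
    have h := mul_le_mul_of_nonneg_left (mul_le_mul_of_nonneg_right hb2 hylnn) hβnn
    refine le_trans h ?_
    by_cases hkℓ : k ≤ ℓ
    · rw [if_pos hkℓ, if_pos hkℓ]
      have id4 : y ^ (n - k) * y ^ ℓ = y ^ (n + ℓ - k) := by
        rw [← pow_add]; congr 1; omega
      refine le_of_eq ?_
      rw [← id4]; ring
    · rw [if_neg hkℓ, if_neg hkℓ, sub_zero]
      exact le_of_eq (by ring)
  have hγstep : γ * A ≤ γ * A := le_refl _
  rw [hsplit, htopsum]
  linarith [hlow, step1, step2]
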